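/- Let g > 0 and let k₀ < −g and k₁ < −g. Let M = [[1, 2/g], [2k₁, 1 + 4k₁/g]]. If (δt, δv) satisfies δt ≠ 0 and δv/δt ≤ k₀, then the image (δ̄t, δ̄v) = M(δt, δv) satisfies δ̄t ≠ 0 and δ̄v/δ̄t = 2k₁ + (δv/δt)/(1 + (2/g)(δv/δt)) ≤ 2k₁ + k₀/(1 + 2k₀/g) < 2k₁ + g < k₁. In particular the unstable cone {δv/δt ≤ k₀} at a point with f̈ = k₀ is mapped strictly into the unstable cone {δv/δt ≤ k₁} at its image, where f̈ = k₁. -/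

import Mathlib

/-- For `g > 0` and `k₀, k₁ < -g`, the matrix `M = [[1, 2/g], [2k₁, 1 + 4k₁/g]]` maps
the unstable cone `{δv/δt ≤ k₀}` strictly into the unstable cone `{δv/δt ≤ k₁}`:
if `δt ≠ 0` and `δv/δt ≤ k₀`, then writing `(δ̄t, δ̄v) = M (δt, δv)` we have `δ̄t ≠ 0` and
`δ̄v/δ̄t = 2k₁ + (δv/δt)/(1 + (2/g)(δv/δt)) ≤ 2k₁ + k₀/(1 + 2k₀/g) < 2k₁ + g < k₁`. -/
theorem unstable_cone_strictly_invariant (g k₀ k₁ δt δv : ℝ)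
    (hg : 0 < g) (hk₀ : k₀ < -g) (hk₁ : k₁ < -g)
    (hδt : δt ≠ 0) (hcone : δv / δt ≤ k₀) :
    δt + 2 / g * δv ≠ 0 ∧
    (2 * k₁ * δt + (1 + 4 * k₁ / g) * δv) / (δt + 2 / g * δv) =
      2 * k₁ + (δv / δt) / (1 + 2 / g * (δv / δt)) ∧
    2 * k₁ + (δv / δt) / (1 + 2 / g * (δv / δt)) ≤ 2 * k₁ + k₀ / (1 + 2 * k₀ / g) ∧
    2 * k₁ + k₀ / (1 + 2 * k₀ / g) < 2 * k₁ + g ∧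
    2 * k₁ + g < k₁ := by
  have hg' : g ≠ 0 := ne_of_gt hg
  obtain ⟨s, hδv⟩ : ∃ s, δv = s * δt := ⟨δv / δt, (div_mul_cancel₀ δv hδt).symm⟩
  have hsval : δv / δt = s := by rw [hδv, mul_div_cancel_right₀ _ hδt]
  rw [hsval] at hcone
  have hden0 : g + 2 * k₀ < 0 := by linarith
  have hdens : g + 2 * s < 0 := by linarith
  have hd1 : 1 + 2 / g * s < 0 := by
    have h : 1 + 2 / g * s = (g + 2 * s) / g := by field_simp
    rw [h]; exact div_neg_of_neg_of_pos hdens hg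
  have hd0 : 1 + 2 * k₀ / g < 0 := by
    have h : 1 + 2 * k₀ / g = (g + 2 * k₀) / g := by field_simp
    rw [h]; exact div_neg_of_neg_of_pos hden0 hg
  have hne : δt + 2 / g * δv ≠ 0 := by
    have h : δt + 2 / g * δv = δt * (1 + 2 / g * s) := by rw [hδv]; ring
    rw [h]
    exact mul_ne_zero hδt (ne_of_lt hd1)
  have hdens' : g + 2 * s ≠ 0 := ne_of_lt hdens
  have hden0' : g + 2 * k₀ ≠ 0 := ne_of_lt hden0
  refine ⟨hne, ?_, ?_, ?_, by linarith⟩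
  · rw [hsval, hδv]
    have h : δt + 2 / g * (s * δt) = δt * (1 + 2 / g * s) := by ring
    rw [h]
    field_simp [hdens']
    ring
  · rw [hsval]
    have e : k₀ / (1 + 2 * k₀ / g) - s / (1 + 2 / g * s) =
        g * g * (k₀ - s) / ((g + 2 * k₀) * (g + 2 * s)) := by
      field_simp [hdens', hden0']
      linear_combination s * mul_inv_cancel₀ (show k₀ * 2 + g ≠ 0 by linarith)
    have hdpos : 0 < (g + 2 * k₀) * (g + 2 * s) := mul_pos_of_neg_of_neg hden0 hdens
    have hnum : 0 ≤ g * g * (k₀ - s) := by nlinarith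
    have := div_nonneg hnum (le_of_lt hdpos)
    linarith [e ▸ this]
  · have h : k₀ / (1 + 2 * k₀ / g) < g := by
      have e : g - k₀ / (1 + 2 * k₀ / g) = (g * (g + 2 * k₀) - g * k₀) / (g + 2 * k₀) := by
        field_simp [hden0']
        linear_combination -(mul_inv_cancel₀ (show k₀ * 2 + g ≠ 0 by linarith))
      have hlt : (g * (g + 2 * k₀) - g * k₀) / (g + 2 * k₀) > 0 := by
        apply div_pos_of_neg_of_neg _ hden0
        nlinarith
      linarith [e ▸ hlt]
    linarith
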